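/- arXiv:1603.07197 — 2 statements merged into one kernel-verified Lean document; each statement's English description precedes it below -/
import Mathlib

section
/- Let Γ, Γ' be finite simplicial graphs. Then the pro-2 completions of the right-angled Coxeter groups C(Γ) and C(Γ') are isomorphic as topological groups if and only if Γ ≅ Γ'. -/
open scoped commutatorElement in
/-- The defining relations of the right-angled Artin group on a graph `Γ`:
commutators of generators spanning an edge. -/
def raagRels {V : Type*} (Γ : SimpleGraph V) : Set (FreeGroup V) :=
  {r | ∃ v w : V, Γ.Adj v w ∧ r = ⁅FreeGroup.of v, FreeGroup.of w⁆}

/-- The right-angled Artin group `A(Γ)` of a graph `Γ`. -/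
def RAAG {V : Type*} (Γ : SimpleGraph V) : Type _ := PresentedGroup (raagRels Γ)

instance {V : Type*} (Γ : SimpleGraph V) : Group (RAAG Γ) :=
  QuotientGroup.Quotient.group _

/-- The generator of `A(Γ)` corresponding to a vertex. -/
def RAAG.gen {V : Type*} (Γ : SimpleGraph V) (v : V) : RAAG Γ :=
  PresentedGroup.of (rels := raagRels Γ) v

/-- The defining relations of the right-angled Coxeter group on a graph `Γ`:
edge commutators together with the squares of all generators. -/
def racgRels {V : Type*} (Γ : SimpleGraph V) : Set (FreeGroup V) :=
  raagRels Γ ∪ {r | ∃ v : V, r = (FreeGroup.of v) ^ 2}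

/-- The right-angled Coxeter group `C(Γ)` of a graph `Γ`. -/
def RACG {V : Type*} (Γ : SimpleGraph V) : Type _ := PresentedGroup (racgRels Γ)

instance {V : Type*} (Γ : SimpleGraph V) : Group (RACG Γ) :=
  QuotientGroup.Quotient.group _

/-- The generator of `C(Γ)` corresponding to a vertex. -/
def RACG.gen {V : Type*} (Γ : SimpleGraph V) (v : V) : RACG Γ :=
  PresentedGroup.of (rels := racgRels Γ) v

/-- A topological group is a pro-`p` group if it is a compact, Hausdorff, totally
disconnected topological group all of whose continuous finite quotients are `p`-groups. -/
structure IsProPGroup (p : ℕ) (K : Type*) [Group K] [TopologicalSpace K] : Prop where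
  topGroup : IsTopologicalGroup K
  compact : CompactSpace K
  t2 : T2Space K
  totallyDisconnected : TotallyDisconnectedSpace K
  quot_isPGroup : ∀ (N : Subgroup K) [N.Normal], IsOpen (N : Set K) → IsPGroup p (K ⧸ N)

/-- `ι : G →* K` exhibits the pro-`p` group `K` as the pro-`p` completion of the
discrete group `G`. -/
structure IsProPCompletion (p : ℕ) (G : Type*) [Group G] (K : Type*) [Group K]
    [TopologicalSpace K] (ι : G →* K) : Prop where
  proP : IsProPGroup p K
  dense : DenseRange ι
  universal : ∀ (F : Type) [Group F] [Finite F] [TopologicalSpace F] [DiscreteTopology F],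
    IsPGroup p F → ∀ f : G →* F, ∃! φ : K →* F, Continuous φ ∧ φ.comp ι = f

/-- The pull-back `P = {(g,h) ∈ G × H : ι g = π h}` of a pair of homomorphisms
`ι : G →* K`, `π : H →* K`, as a subgroup of `G × H`. -/
def extensionPullback {G H K : Type*} [Group G] [Group H] [Group K]
    (ι : G →* K) (π : H →* K) : Subgroup (G × H) where
  carrier := {x | ι x.1 = π x.2}
  one_mem' := by simp
  mul_mem' := by
    intro a b ha hb
    simp only [Set.mem_setOf_eq, Prod.fst_mul, Prod.snd_mul, map_mul] at *
    rw [ha, hb]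
  inv_mem' := by
    intro a ha
    simp only [Set.mem_setOf_eq, Prod.fst_inv, Prod.snd_inv, map_inv] at *
    rw [ha]


open scoped commutatorElement

set_option linter.unusedSectionVars false
set_option maxHeartbeats 1000000

section S1
variable {V : Type*} (Γ : SimpleGraph V)
namespace RACG

theorem gen_sq (v : V) : (gen Γ v) ^ 2 = 1 := by
  have : ((FreeGroup.of v)^2 : FreeGroup V) ∈ Subgroup.normalClosure (racgRels Γ) :=
    Subgroup.subset_normalClosure (Or.inr ⟨v, rfl⟩)
  have h := (QuotientGroup.eq_one_iff (((FreeGroup.of v))^2 : FreeGroup V)).2 this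
  exact h

theorem gen_comm {v w : V} (h : Γ.Adj v w) : (gen Γ v) * (gen Γ w) = (gen Γ w) * (gen Γ v) := by
  have : (⁅FreeGroup.of v, FreeGroup.of w⁆ : FreeGroup V) ∈ Subgroup.normalClosure (racgRels Γ) :=
    Subgroup.subset_normalClosure (Or.inl ⟨v, w, h, rfl⟩)
  have h1 := (QuotientGroup.eq_one_iff _).2 this
  have h2 : ⁅gen Γ v, gen Γ w⁆ = 1 := by
    exact h1
  have := commutatorElement_eq_one_iff_mul_comm.1 h2
  rw [this]

theorem closure_range_gen : Subgroup.closure (Set.range (gen Γ)) = ⊤ :=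
  PresentedGroup.closure_range_of _

/-- Build a hom out of `RACG` from a vertex map satisfying the relations. -/
def lift {G : Type*} [Group G] (f : V → G) (hsq : ∀ v, (f v) ^ 2 = 1)
    (hcomm : ∀ v w, Γ.Adj v w → f v * f w = f w * f v) : RACG Γ →* G :=
  PresentedGroup.toGroup (f := f) (by
    rintro r (⟨v, w, hadj, rfl⟩ | ⟨v, rfl⟩)
    · rw [map_commutatorElement, FreeGroup.lift_apply_of, FreeGroup.lift_apply_of,
        commutatorElement_eq_one_iff_mul_comm]
      exact hcomm v w hadj
    · simpa using hsq v)

@[simp] theorem lift_gen {G : Type*} [Group G] (f : V → G) (hsq : ∀ v, (f v) ^ 2 = 1)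
    (hcomm : ∀ v w, Γ.Adj v w → f v * f w = f w * f v) (v : V) :
    lift Γ f hsq hcomm (gen Γ v) = f v := by
  exact PresentedGroup.toGroup.of _

theorem hom_ext {G : Type*} [Group G] {φ ψ : RACG Γ →* G}
    (h : ∀ v, φ (gen Γ v) = ψ (gen Γ v)) : φ = ψ :=
  PresentedGroup.ext h

end RACG

end S1
section S3
variable {V : Type*} [Fintype V] [DecidableEq V]

/-- Support of a `ZMod 2`-vector, as a `Finset`. -/
def spt (a : V → ZMod 2) : Finset V := Finset.univ.filter (a · ≠ 0)

lemma mem_spt {a : V → ZMod 2} {x : V} : x ∈ spt a ↔ a x ≠ 0 := by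
  simp [spt]

lemma zmod2_cases : ∀ z : ZMod 2, z = 0 ∨ z = 1 := by decide

lemma zmod2_ne_zero {z : ZMod 2} : z ≠ 0 ↔ z = 1 := by
  rcases zmod2_cases z with h | h <;> subst h <;> simp

lemma spt_add_subset (a b : V → ZMod 2) : spt (a + b) ⊆ spt a ∪ spt b := by
  intro x hx
  rw [mem_spt] at hx
  by_contra hc
  simp only [Finset.mem_union, mem_spt, not_or, not_not] at hc
  apply hx
  simp [Pi.add_apply, hc.1, hc.2]

lemma spt_sum_subset {ι : Type*} (s : Finset ι) (g : ι → V → ZMod 2) :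
    spt (∑ u ∈ s, g u) ⊆ s.biUnion (fun u => spt (g u)) := by
  classical
  induction s using Finset.induction_on with
  | empty => intro x hx; rw [mem_spt] at hx; simp at hx
  | insert a s h ih =>
    rw [Finset.sum_insert h]
    refine (spt_add_subset _ _).trans ?_
    rw [Finset.biUnion_insert]
    exact Finset.union_subset_union le_rfl ih

lemma sum_single_spt (a : V → ZMod 2) :
    ∑ v ∈ spt a, (Pi.single v (1 : ZMod 2) : V → ZMod 2) = a := by
  funext w
  rw [Finset.sum_apply]
  have h1 : ∀ v : V, (Pi.single v (1 : ZMod 2) : V → ZMod 2) w = if v = w then 1 else 0 := by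
    intro v; by_cases h : v = w <;> simp [Pi.single_apply, h]
  simp_rw [h1]
  rw [Finset.sum_ite_eq']
  by_cases hw : w ∈ spt a
  · rw [if_pos hw]
    exact ((zmod2_ne_zero).1 (mem_spt.1 hw)).symm
  · rw [if_neg hw]
    rw [mem_spt, not_not] at hw
    exact hw.symm

lemma spt_single (v : V) : spt (Pi.single v (1 : ZMod 2) : V → ZMod 2) = {v} := by
  ext w
  rw [mem_spt, Finset.mem_singleton]
  by_cases h : w = v
  · subst h; simp
  · simp [Pi.single_apply, Ne.symm h, h]
end S3
section S2
variable {V : Type*} [Fintype V] [LinearOrder V] (Γ : SimpleGraph V) [DecidableRel Γ.Adj]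

/-- Bilinear cocycle used to build the class-2 finite quotient of `C(Γ)`. -/
def bform (a c : V → ZMod 2) : V × V → ZMod 2 :=
  fun p => if p.1 < p.2 ∧ ¬ Γ.Adj p.1 p.2 then a p.2 * c p.1 else 0

lemma bform_add_left (a b c : V → ZMod 2) :
    bform Γ (a + b) c = bform Γ a c + bform Γ b c := by
  funext p; simp only [bform, Pi.add_apply]
  split <;> ring

lemma bform_add_right (a b c : V → ZMod 2) :
    bform Γ a (b + c) = bform Γ a b + bform Γ a c := by
  funext p; simp only [bform, Pi.add_apply]
  split <;> ring

lemma bform_zero_left (c : V → ZMod 2) : bform Γ 0 c = 0 := by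
  funext p; simp [bform]

lemma bform_zero_right (c : V → ZMod 2) : bform Γ c 0 = 0 := by
  funext p; simp [bform]

/-- The concrete finite class-2 quotient group of `C(Γ)`. -/
def FG (_Γ : SimpleGraph V) : Type _ := (V → ZMod 2) × (V × V → ZMod 2)

namespace FG

variable {Γ}

instance : Finite (FG Γ) := inferInstanceAs (Finite ((V → ZMod 2) × (V × V → ZMod 2)))

instance : Mul (FG Γ) := ⟨fun g h => (g.1 + h.1, g.2 + h.2 + bform Γ g.1 h.1)⟩
instance : One (FG Γ) := ⟨((0 : V → ZMod 2), (0 : V × V → ZMod 2))⟩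
instance : Inv (FG Γ) := ⟨fun g => (g.1, g.2 + bform Γ g.1 g.1)⟩

lemma mul_def (g h : FG Γ) : g * h = (g.1 + h.1, g.2 + h.2 + bform Γ g.1 h.1) := rfl
lemma one_def : (1 : FG Γ) = ((0 : V → ZMod 2), (0 : V × V → ZMod 2)) := rfl
lemma inv_def (g : FG Γ) : g⁻¹ = (g.1, g.2 + bform Γ g.1 g.1) := rfl

lemma addself {W : Type*} (a : W → ZMod 2) : a + a = 0 := by
  funext x; simp only [Pi.add_apply, Pi.zero_apply]
  exact CharTwo.add_self_eq_zero _

instance instGroup : Group (FG Γ) where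
  mul_assoc g h k := by
    show ((g.1 + h.1) + k.1, _) = (g.1 + (h.1 + k.1), _)
    refine Prod.ext (add_assoc _ _ _) ?_
    show (g.2 + h.2 + bform Γ g.1 h.1) + k.2 + bform Γ (g.1 + h.1) k.1
       = g.2 + (h.2 + k.2 + bform Γ h.1 k.1) + bform Γ g.1 (h.1 + k.1)
    rw [bform_add_left, bform_add_right]
    abel
  one_mul g := by
    refine Prod.ext ?_ ?_
    · show (0 : V → ZMod 2) + g.1 = g.1
      exact zero_add _
    · show (0 : V × V → ZMod 2) + g.2 + bform Γ 0 g.1 = g.2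
      rw [bform_zero_left]; abel
  mul_one g := by
    refine Prod.ext ?_ ?_
    · show g.1 + (0 : V → ZMod 2) = g.1
      exact add_zero _
    · show g.2 + 0 + bform Γ g.1 0 = g.2
      rw [bform_zero_right]; abel
  inv_mul_cancel g := by
    refine Prod.ext ?_ ?_
    · show g.1 + g.1 = 0
      exact addself g.1
    · show (g.2 + bform Γ g.1 g.1) + g.2 + bform Γ g.1 g.1 = 0
      have h1 := addself g.2
      have h2 := addself (bform Γ g.1 g.1)
      calc (g.2 + bform Γ g.1 g.1) + g.2 + bform Γ g.1 g.1
          = (g.2 + g.2) + (bform Γ g.1 g.1 + bform Γ g.1 g.1) := by abel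
        _ = 0 := by rw [h1, h2, add_zero]

lemma sq_eq (g : FG Γ) : @Eq (FG Γ) (g ^ 2) ((0 : V → ZMod 2), bform Γ g.1 g.1) := by
  rw [pow_two, mul_def]
  refine Prod.ext ?_ ?_
  · show g.1 + g.1 = 0
    exact addself g.1
  · show g.2 + g.2 + bform Γ g.1 g.1 = bform Γ g.1 g.1
    rw [addself g.2, zero_add]

lemma fst_mul (g h : FG Γ) : (g * h).1 = g.1 + h.1 := rfl
lemma fst_inv (g : FG Γ) : (g⁻¹).1 = g.1 := rfl
lemma fst_one : ((1 : FG Γ)).1 = 0 := rfl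

lemma comm_eq (g h : FG Γ) : @Eq (FG Γ) ⁅g, h⁆ ((0 : V → ZMod 2), bform Γ g.1 h.1 + bform Γ h.1 g.1) := by
  rw [commutatorElement_def, mul_def, mul_def, mul_def, inv_def, inv_def]
  refine Prod.ext ?_ ?_
  · show g.1 + h.1 + g.1 + h.1 = 0
    calc g.1 + h.1 + g.1 + h.1 = (g.1 + g.1) + (h.1 + h.1) := by abel
      _ = 0 := by rw [addself, addself, add_zero]
  · show g.2 + h.2 + bform Γ g.1 h.1 + (g.2 + bform Γ g.1 g.1) + bform Γ (g.1 + h.1) g.1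
        + (h.2 + bform Γ h.1 h.1) + bform Γ (g.1 + h.1 + g.1) h.1
      = bform Γ g.1 h.1 + bform Γ h.1 g.1
    rw [bform_add_left, bform_add_left, bform_add_left]
    have h2 : ∀ x : V × V → ZMod 2, (2 : ℤ) • x = 0 := fun x => by
      rw [two_zsmul]; exact addself x
    have h3 : ∀ x : V × V → ZMod 2, (3 : ℤ) • x = x := fun x => by
      have : (3 : ℤ) = 2 + 1 := by norm_num
      rw [this, add_zsmul, h2, one_zsmul, zero_add]
    abel_nf
    rw [h2 g.2, h2 h.2, h3, h2 (bform Γ g.1 g.1), h2 (bform Γ h.1 h.1)]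
    abel

lemma isPGroup : IsPGroup 2 (FG Γ) := by
  intro g
  refine ⟨2, ?_⟩
  show g ^ (2 ^ 2) = 1
  have : g ^ (2 ^ 2) = (g ^ 2) ^ 2 := by
    rw [← pow_mul]
    norm_num
  rw [this, sq_eq, sq_eq, one_def]
  refine Prod.ext rfl ?_
  show bform Γ (0 : V → ZMod 2) 0 = 0
  rw [bform_zero_left]

end FG
end S2
section S4
variable {V : Type*} [Fintype V] [LinearOrder V] {Γ : SimpleGraph V} [DecidableRel Γ.Adj]

lemma clique_of_bform_diag {a : V → ZMod 2} (h : bform Γ a a = 0) :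
    Γ.IsClique ↑(spt a) := by
  intro x hx y hy hxy
  simp only [Finset.coe_filter, Set.mem_setOf_eq, Finset.mem_coe] at hx hy
  by_contra hadj
  rcases lt_trichotomy x y with hlt | heq | hgt
  · have := congrFun h (x, y)
    simp only [bform, Pi.zero_apply] at this
    rw [if_pos ⟨hlt, hadj⟩] at this
    rw [zmod2_ne_zero.1 (mem_spt.1 hx), zmod2_ne_zero.1 (mem_spt.1 hy), one_mul] at this
    exact one_ne_zero this
  · exact hxy heq
  · have := congrFun h (y, x)
    simp only [bform, Pi.zero_apply] at this
    rw [if_pos ⟨hgt, fun hc => hadj hc.symm⟩] at this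
    rw [zmod2_ne_zero.1 (mem_spt.1 hx), zmod2_ne_zero.1 (mem_spt.1 hy), one_mul] at this
    exact one_ne_zero this

lemma clique_union_of_bform {a c : V → ZMod 2} (ha : Γ.IsClique ↑(spt a))
    (hc : Γ.IsClique ↑(spt c)) (h : bform Γ a c + bform Γ c a = 0) :
    Γ.IsClique ↑(spt a ∪ spt c) := by
  have key : ∀ x y : V, x < y → x ∈ spt a ∪ spt c → y ∈ spt a ∪ spt c → Γ.Adj x y ∨ x = y := by
    intro x y hlt hx hy
    by_contra hcon
    push_neg at hcon
    obtain ⟨hadj, _⟩ := hcon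
    have hxy : x ≠ y := ne_of_lt hlt
    have heq := congrFun h (x, y)
    simp only [bform, Pi.add_apply, Pi.zero_apply] at heq
    rw [if_pos ⟨hlt, hadj⟩, if_pos ⟨hlt, hadj⟩] at heq
    -- heq : a y * c x + c y * a x = 0
    by_cases hxa : x ∈ spt a
    · by_cases hya : y ∈ spt a
      · exact hadj (ha (Finset.mem_coe.2 hxa) (Finset.mem_coe.2 hya) hxy)
      · have hyc : y ∈ spt c := by
          rcases Finset.mem_union.1 hy with h' | h'
          · exact absurd h' hya
          · exact h'
        have hay : a y = 0 := not_not.1 (fun hne => hya (mem_spt.2 hne))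
        rw [hay, zero_mul, zero_add, zmod2_ne_zero.1 (mem_spt.1 hyc),
          zmod2_ne_zero.1 (mem_spt.1 hxa), one_mul] at heq
        exact one_ne_zero heq
    · have hxc : x ∈ spt c := by
        rcases Finset.mem_union.1 hx with h' | h'
        · exact absurd h' hxa
        · exact h'
      by_cases hyc : y ∈ spt c
      · exact hadj (hc (Finset.mem_coe.2 hxc) (Finset.mem_coe.2 hyc) hxy)
      · have hya : y ∈ spt a := by
          rcases Finset.mem_union.1 hy with h' | h'
          · exact h'
          · exact absurd h' hyc
        have hcy : c y = 0 := not_not.1 (fun hne => hyc (mem_spt.2 hne))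
        have hax : a x = 0 := not_not.1 (fun hne => hxa (mem_spt.2 hne))
        rw [hcy, hax, mul_zero, add_zero,
          zmod2_ne_zero.1 (mem_spt.1 hya), zmod2_ne_zero.1 (mem_spt.1 hxc), one_mul] at heq
        exact one_ne_zero heq
  intro x hx y hy hxy
  simp only [Finset.coe_union] at hx hy
  have hx' : x ∈ spt a ∪ spt c := by
    rcases hx with h' | h'
    · exact Finset.mem_union.2 (Or.inl h')
    · exact Finset.mem_union.2 (Or.inr h')
  have hy' : y ∈ spt a ∪ spt c := by
    rcases hy with h' | h'
    · exact Finset.mem_union.2 (Or.inl h')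
    · exact Finset.mem_union.2 (Or.inr h')
  rcases lt_trichotomy x y with hlt | heq | hgt
  · rcases key x y hlt hx' hy' with h' | h'
    · exact h'
    · exact absurd h' hxy
  · exact absurd heq hxy
  · rcases key y x hgt hy' hx' with h' | h'
    · exact h'.symm
    · exact absurd h'.symm hxy

lemma bform_single_diag (v : V) :
    bform Γ (Pi.single v (1 : ZMod 2)) (Pi.single v (1 : ZMod 2)) = 0 := by
  funext p
  simp only [bform, Pi.zero_apply]
  split_ifs with h
  · obtain ⟨hlt, _⟩ := h
    by_cases h2 : p.2 = v
    · by_cases h1 : p.1 = v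
      · rw [h1, h2] at hlt; exact absurd hlt (lt_irrefl v)
      · rw [Pi.single_eq_of_ne h1, mul_zero]
    · rw [Pi.single_eq_of_ne h2, zero_mul]
  · rfl

lemma bform_single_comm {v w : V} (hadj : Γ.Adj v w) :
    bform Γ (Pi.single v (1 : ZMod 2)) (Pi.single w (1 : ZMod 2))
      + bform Γ (Pi.single w (1 : ZMod 2)) (Pi.single v (1 : ZMod 2)) = 0 := by
  funext p
  simp only [bform, Pi.add_apply, Pi.zero_apply]
  split_ifs with h
  · obtain ⟨hlt, hnadj⟩ := h
    have t1 : (Pi.single v (1:ZMod 2) : V → ZMod 2) p.2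
        * (Pi.single w (1:ZMod 2) : V → ZMod 2) p.1 = 0 := by
      by_cases h2 : p.2 = v
      · by_cases h1 : p.1 = w
        · exfalso; rw [h1, h2] at hnadj; exact hnadj hadj.symm
        · rw [Pi.single_eq_of_ne h1, mul_zero]
      · rw [Pi.single_eq_of_ne h2, zero_mul]
    have t2 : (Pi.single w (1:ZMod 2) : V → ZMod 2) p.2
        * (Pi.single v (1:ZMod 2) : V → ZMod 2) p.1 = 0 := by
      by_cases h2 : p.2 = w
      · by_cases h1 : p.1 = v
        · exfalso; rw [h1, h2] at hnadj; exact hnadj hadj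
        · rw [Pi.single_eq_of_ne h1, mul_zero]
      · rw [Pi.single_eq_of_ne h2, zero_mul]
    rw [t1, t2, add_zero]
  · rfl

variable (Γ)

/-- The canonical homomorphism `C(Γ) → FG Γ`. -/
def canFG : RACG Γ →* FG Γ :=
  RACG.lift Γ (fun v => id (α := FG Γ) ((Pi.single v (1 : ZMod 2) : V → ZMod 2), (0 : V × V → ZMod 2)))
    (fun v => by
      rw [FG.sq_eq]
      show (_, _) = (1 : FG Γ)
      rw [FG.one_def]
      exact Prod.ext rfl (bform_single_diag v))
    (fun v w hadj => by
      rw [← commutatorElement_eq_one_iff_mul_comm, FG.comm_eq, FG.one_def]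
      exact Prod.ext rfl (bform_single_comm hadj))

lemma canFG_gen (v : V) :
    canFG Γ (RACG.gen Γ v) = ((Pi.single v (1 : ZMod 2) : V → ZMod 2), (0 : V × V → ZMod 2)) :=
  RACG.lift_gen _ _ _ _ v

variable {Γ}
variable {V' : Type*} {Γ' : SimpleGraph V'}

/-- First components of images of the generators under a homomorphism into `FG Γ`. -/
def avec (f : RACG Γ' →* FG Γ) (u : V') : V → ZMod 2 := (f (RACG.gen Γ' u)).1

lemma extract_sq (f : RACG Γ' →* FG Γ) (u : V') : Γ.IsClique ↑(spt (avec f u)) := by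
  have h1 : (f (RACG.gen Γ' u)) ^ 2 = 1 := by
    rw [← map_pow, RACG.gen_sq, map_one]
  rw [FG.sq_eq] at h1
  have h2 := congrArg Prod.snd h1
  exact clique_of_bform_diag h2

lemma extract_edge (f : RACG Γ' →* FG Γ) {u w : V'} (h : Γ'.Adj u w) :
    Γ.IsClique ↑(spt (avec f u) ∪ spt (avec f w)) := by
  have hcomm : f (RACG.gen Γ' u) * f (RACG.gen Γ' w)
      = f (RACG.gen Γ' w) * f (RACG.gen Γ' u) := by
    rw [← map_mul, ← map_mul, RACG.gen_comm Γ' h]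
  have h1 : ⁅f (RACG.gen Γ' u), f (RACG.gen Γ' w)⁆ = 1 :=
    commutatorElement_eq_one_iff_mul_comm.2 hcomm
  rw [FG.comm_eq] at h1
  have h2 := congrArg Prod.snd h1
  exact clique_union_of_bform (extract_sq f u) (extract_sq f w) h2

end S4
section S5

/-- Transfer of finite `2`-group quotients along an isomorphism of pro-2 completions. -/
lemma quotient_transfer {G G' K K' : Type*} [Group G] [Group G'] [Group K] [Group K']
    [TopologicalSpace K] [TopologicalSpace K'] {ι : G →* K} {ι' : G' →* K'}
    (hK : IsProPCompletion 2 G K ι) (hK' : IsProPCompletion 2 G' K' ι')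
    (e : K ≃* K') (he' : Continuous e.symm)
    (Q : Type) [Group Q] [Finite Q] (hQ : IsPGroup 2 Q)
    (g : G →* Q) (hg : Function.Surjective g) :
    ∃ h : G' →* Q, Function.Surjective h := by
  letI : TopologicalSpace Q := ⊥
  haveI : DiscreteTopology Q := ⟨rfl⟩
  obtain ⟨φ, ⟨hφc, hφι⟩, -⟩ := hK.universal Q hQ g
  let χ : K' →* Q := φ.comp e.symm.toMonoidHom
  have hχc : Continuous χ := hφc.comp he'
  refine ⟨χ.comp ι', fun q => ?_⟩
  obtain ⟨x, hx⟩ := hg q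
  have hK : χ (e (ι x)) = q := by
    have : e.symm (e (ι x)) = ι x := e.symm_apply_apply _
    show φ (e.symm (e (ι x))) = q
    rw [this]
    have := DFunLike.congr_fun hφι x
    simpa using this.trans hx
  have hopen : IsOpen (χ ⁻¹' {q}) := (isOpen_discrete _).preimage hχc
  have hne : (χ ⁻¹' {q}).Nonempty := ⟨e (ι x), hK⟩
  obtain ⟨y, hy⟩ := hK'.dense.exists_mem_open hopen hne
  exact ⟨y, hy⟩

end S5
section S6
variable {V V' : Type*} [Fintype V] [Fintype V'] [LinearOrder V] [LinearOrder V']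
  {Γ : SimpleGraph V} {Γ' : SimpleGraph V'} [DecidableRel Γ.Adj]

/-- The linearization over `F₂` of a homomorphism `C(Γ') → FG Γ`. -/
def alphaOf (f : RACG Γ' →* FG Γ) : (V' → ZMod 2) → (V → ZMod 2) :=
  fun c => ∑ u : V', c u • avec f u

lemma alphaOf_add (f : RACG Γ' →* FG Γ) (c d : V' → ZMod 2) :
    alphaOf f (c + d) = alphaOf f c + alphaOf f d := by
  unfold alphaOf
  rw [← Finset.sum_add_distrib]
  refine Finset.sum_congr rfl fun u _ => ?_
  rw [Pi.add_apply, add_smul]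

lemma alphaOf_single (f : RACG Γ' →* FG Γ) (u : V') :
    alphaOf f (Pi.single u (1 : ZMod 2)) = avec f u := by
  unfold alphaOf
  rw [Finset.sum_eq_single u]
  · simp
  · intro b _ hb
    rw [Pi.single_eq_of_ne hb, zero_smul]
  · intro h; exact absurd (Finset.mem_univ u) h

lemma alphaOf_eq_sum_spt (f : RACG Γ' →* FG Γ) (c : V' → ZMod 2) :
    alphaOf f c = ∑ u ∈ spt c, avec f u := by
  unfold alphaOf
  rw [← Finset.sum_subset (Finset.subset_univ (spt c))]
  · refine Finset.sum_congr rfl fun u hu => ?_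
    rw [zmod2_ne_zero.1 (mem_spt.1 hu), one_smul]
  · intro u _ hu
    rw [not_not.1 (fun hne => hu (mem_spt.2 hne)), zero_smul]

lemma spt_alphaOf_subset (f : RACG Γ' →* FG Γ) (c : V' → ZMod 2) :
    spt (alphaOf f c) ⊆ (spt c).biUnion (fun u => spt (avec f u)) := by
  rw [alphaOf_eq_sum_spt]
  exact spt_sum_subset _ _

/-- `alphaOf` maps clique vectors to clique vectors. -/
lemma alphaOf_clique (f : RACG Γ' →* FG Γ) (c : V' → ZMod 2)
    (hc : Γ'.IsClique ↑(spt c)) : Γ.IsClique ↑(spt (alphaOf f c)) := by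
  have hsub : ↑(spt (alphaOf f c)) ⊆ (↑((spt c).biUnion (fun u => spt (avec f u))) : Set V) :=
    Finset.coe_subset.2 (spt_alphaOf_subset f c)
  refine SimpleGraph.IsClique.subset hsub ?_
  intro x hx y hy hxy
  simp only [Finset.coe_biUnion, Set.mem_iUnion, Finset.mem_coe] at hx hy
  obtain ⟨u, hu, hxu⟩ := hx
  obtain ⟨w, hw, hyw⟩ := hy
  by_cases huw : u = w
  · subst huw
    exact extract_sq f u (Finset.mem_coe.2 hxu) (Finset.mem_coe.2 hyw) hxy
  · have hadj : Γ'.Adj u w := hc (Finset.mem_coe.2 hu) (Finset.mem_coe.2 hw) huw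
    exact extract_edge f hadj (Finset.mem_coe.2 (Finset.mem_union.2 (Or.inl hxu)))
      (Finset.mem_coe.2 (Finset.mem_union.2 (Or.inr hyw))) hxy

/-- There is a group element realizing any prescribed first component of `canFG`. -/
lemma canFG_fst_surj (Γ : SimpleGraph V) [DecidableRel Γ.Adj] (b : V → ZMod 2) :
    ∃ r : RACG Γ, (canFG Γ r).1 = b := by
  have key : ∀ s : Finset V, ∃ r : RACG Γ,
      (canFG Γ r).1 = ∑ v ∈ s, (Pi.single v (1 : ZMod 2) : V → ZMod 2) := by
    intro s
    induction s using Finset.induction_on with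
    | empty => exact ⟨1, by rw [map_one, FG.fst_one, Finset.sum_empty]⟩
    | insert a s h ih =>
      obtain ⟨r, hr⟩ := ih
      refine ⟨RACG.gen Γ a * r, ?_⟩
      rw [map_mul, FG.fst_mul, hr, canFG_gen, Finset.sum_insert h]
  obtain ⟨r, hr⟩ := key (spt b)
  exact ⟨r, by rw [hr, sum_single_spt]⟩

/-- If `f`'s image contains the image of the canonical map, `alphaOf f` is surjective. -/
lemma alphaOf_surj (f : RACG Γ' →* FG Γ)
    (hf : ∀ b : V → ZMod 2, ∃ y : RACG Γ', (f y).1 = b) :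
    Function.Surjective (alphaOf f) := by
  have main : ∀ y : RACG Γ', ∃ c, alphaOf f c = (f y).1 := by
    intro y
    have hy : y ∈ Subgroup.closure (Set.range (RACG.gen Γ')) := by
      rw [RACG.closure_range_gen]; trivial
    induction hy using Subgroup.closure_induction with
    | mem x hx =>
      obtain ⟨u, rfl⟩ := hx
      exact ⟨Pi.single u 1, by rw [alphaOf_single]; rfl⟩
    | one => exact ⟨0, by
        have : alphaOf f 0 = 0 := by
          unfold alphaOf; simp
        rw [this, map_one, FG.fst_one]⟩
    | mul x z _ _ ihx ihz =>
      obtain ⟨c1, hc1⟩ := ihx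
      obtain ⟨c2, hc2⟩ := ihz
      exact ⟨c1 + c2, by rw [alphaOf_add, hc1, hc2, map_mul, FG.fst_mul]⟩
    | inv x _ ihx =>
      obtain ⟨c1, hc1⟩ := ihx
      exact ⟨c1, by rw [hc1, map_inv, FG.fst_inv]⟩
  intro b
  obtain ⟨y, hy⟩ := hf b
  obtain ⟨c, hc⟩ := main y
  exact ⟨c, hc.trans hy⟩

end S6
section S7
variable {V V' : Type*} [Fintype V] [Fintype V'] [DecidableEq V] [DecidableEq V']
  {Γ : SimpleGraph V} {Γ' : SimpleGraph V'}

/-- From mutually inverse-direction clique-vector-preserving surjections, get an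
additive equivalence which, together with its inverse, preserves clique vectors. -/
lemma exists_cliquemap_equiv
    (α : (V' → ZMod 2) → (V → ZMod 2)) (β : (V → ZMod 2) → (V' → ZMod 2))
    (hαadd : ∀ c d, α (c + d) = α c + α d) (hβadd : ∀ c d, β (c + d) = β c + β d)
    (hαsurj : Function.Surjective α) (hβsurj : Function.Surjective β)
    (hαcl : ∀ c, Γ'.IsClique ↑(spt c) → Γ.IsClique ↑(spt (α c)))
    (hβcl : ∀ b, Γ.IsClique ↑(spt b) → Γ'.IsClique ↑(spt (β b))) :
    ∃ A : (V' → ZMod 2) ≃+ (V → ZMod 2),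
      (∀ c, Γ'.IsClique ↑(spt c) → Γ.IsClique ↑(spt (A c))) ∧
      (∀ b, Γ.IsClique ↑(spt b) → Γ'.IsClique ↑(spt (A.symm b))) := by
  have hcard : Fintype.card (V' → ZMod 2) = Fintype.card (V → ZMod 2) :=
    le_antisymm (Fintype.card_le_of_surjective β hβsurj)
      (Fintype.card_le_of_surjective α hαsurj)
  have hαbij : Function.Bijective α :=
    (Fintype.bijective_iff_surjective_and_card α).2 ⟨hαsurj, hcard⟩
  have hβbij : Function.Bijective β :=
    (Fintype.bijective_iff_surjective_and_card β).2 ⟨hβsurj, hcard.symm⟩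
  let A : (V' → ZMod 2) ≃+ (V → ZMod 2) :=
    { Equiv.ofBijective α hαbij with map_add' := hαadd }
  let B : (V → ZMod 2) ≃+ (V' → ZMod 2) :=
    { Equiv.ofBijective β hβbij with map_add' := hβadd }
  have hAapp : ∀ c, A c = α c := fun _ => rfl
  have hBapp : ∀ b, B b = β b := fun _ => rfl
  let C : Equiv.Perm (V' → ZMod 2) := (A.trans B).toEquiv
  haveI : Finite (AddAut (V' → ZMod 2)) :=
    Finite.of_injective (fun (g : AddAut (V' → ZMod 2)) => (g : (V' → ZMod 2) → (V' → ZMod 2)))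
      (fun g h H => AddEquiv.ext (congrFun H))
  -- powers of C preserve clique vectors
  have hCpow : ∀ k : ℕ, ∀ c, Γ'.IsClique ↑(spt c) → Γ'.IsClique ↑(spt ((C ^ k) c)) := by
    intro k
    induction k with
    | zero => intro c hc; simpa using hc
    | succ k ih =>
      intro c hc
      have h1 : (C ^ (k + 1)) c = (C ^ k) (C c) := by
        rw [pow_succ]
        rfl
      rw [h1]
      exact ih _ (hβcl _ (hαcl _ hc))
  have hord : C ^ orderOf C = 1 := pow_orderOf_eq_one C
  have hpos : 0 < orderOf C := orderOf_pos C
  -- A.symm = C^(orderOf C - 1) ∘ B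
  have hsymm : ∀ b, A.symm b = (C ^ (orderOf C - 1)) (B b) := by
    intro b
    apply hαbij.1
    show α (A.symm b) = α ((C ^ (orderOf C - 1)) (B b))
    rw [← hAapp, ← hAapp]
    rw [A.apply_symm_apply]
    obtain ⟨z, rfl⟩ := hαbij.2 b
    rw [← hAapp]
    have hCz : B (A z) = C z := rfl
    rw [hCz]
    have : (C ^ (orderOf C - 1)) (C z) = (C ^ orderOf C) z := by
      conv_rhs => rw [← Nat.succ_pred_eq_of_pos hpos]
      rw [pow_succ]
      rfl
    rw [this, hord]
    rfl
  refine ⟨A, fun c hc => ?_, fun b hb => ?_⟩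
  · exact hαcl c hc
  · rw [hsymm b]
    exact hCpow _ _ (hβcl _ hb)

end S7
section S8
open scoped Classical
variable {W : Type*} [Fintype W]

lemma finset_mem_inf {ι : Type*} (J : Finset ι) (f : ι → Finset W) (x : W) :
    x ∈ J.inf f ↔ ∀ i ∈ J, x ∈ f i := by
  induction J using Finset.induction_on with
  | empty =>
    rw [Finset.inf_empty]
    simp [Finset.top_eq_univ]
  | insert a s h ih =>
    rw [Finset.inf_insert]
    simp only [Finset.mem_insert, Finset.inf_eq_inter, Finset.mem_inter]
    constructor
    · rintro ⟨h1, h2⟩ i hi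
      rcases hi with rfl | hi
      · exact h1
      · exact (ih.1 h2) i hi
    · intro h'
      exact ⟨h' a (Or.inl rfl), ih.2 fun i hi => h' i (Or.inr hi)⟩

lemma card_filter_fiber_sum {A B : Type*} [Fintype A] [DecidableEq B]
    (f : A → Finset B) (I J : Finset B) (hf : ∀ a, f a ⊆ I) :
    (Finset.univ.filter (fun a => J ⊆ f a)).card
      = ∑ K ∈ I.powerset.filter (fun K => J ⊆ K),
          (Finset.univ.filter (fun a => f a = K)).card := by
  rw [Finset.card_eq_sum_card_fiberwise
    (f := f) (t := I.powerset.filter (fun K => J ⊆ K))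
    (fun a ha => by
      simp only [Finset.mem_coe, Finset.mem_filter, Finset.mem_powerset]
      simp only [Finset.mem_coe, Finset.mem_filter] at ha
      exact ⟨hf a, ha.2⟩)]
  refine Finset.sum_congr rfl fun K hK => ?_
  simp only [Finset.mem_filter, Finset.mem_powerset] at hK
  congr 1
  rw [Finset.filter_filter]
  apply Finset.filter_congr
  intro a _
  constructor
  · rintro ⟨-, h⟩; exact h
  · intro h; exact ⟨h ▸ hK.2, h⟩

variable [DecidableEq W] {G : SimpleGraph W}

lemma finset_pair_clique {u w : W} (h : G.Adj u w) :
    G.IsClique ↑({u, w} : Finset W) := by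
  intro x hx y hy hxy
  simp only [Finset.coe_insert, Finset.coe_singleton, Set.mem_insert_iff,
    Set.mem_singleton_iff] at hx hy
  rcases hx with rfl | rfl <;> rcases hy with rfl | rfl
  · exact absurd rfl hxy
  · exact h
  · exact h.symm
  · exact absurd rfl hxy

/-- Every clique is contained in a maximal clique. -/
lemma exists_max_clique (s : Finset W) (hs : G.IsClique ↑s) :
    ∃ M : Finset W, (G.IsClique ↑M ∧ ∀ t : Finset W, G.IsClique ↑t → M ⊆ t → t = M)
      ∧ s ⊆ M := by
  have hne : (Finset.univ.filter
      (fun t : Finset W => G.IsClique ↑t ∧ s ⊆ t)).Nonempty :=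
    ⟨s, by simp [hs]⟩
  obtain ⟨M, hM, hmax⟩ := Finset.exists_max_image _ Finset.card hne
  simp only [Finset.mem_filter, Finset.mem_univ, true_and] at hM
  refine ⟨M, ⟨hM.1, fun t ht hMt => ?_⟩, hM.2⟩
  have ht' : t ∈ Finset.univ.filter (fun t : Finset W => G.IsClique ↑t ∧ s ⊆ t) := by
    simp only [Finset.mem_filter, Finset.mem_univ, true_and]
    exact ⟨ht, hM.2.trans hMt⟩
  exact (Finset.eq_of_subset_of_card_le hMt (hmax t ht')).symm

end S8

section S9
open scoped Classical
variable {V V' : Type*} [Fintype V] [Fintype V']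
  {Γ : SimpleGraph V} {Γ' : SimpleGraph V'}

/-- Maximal cliques transfer along a clique-preserving Galois-type pair. -/
lemma maxclique_transfer (Φ : Finset V' → Finset V) (Φ' : Finset V → Finset V')
    (hm : ∀ {s t : Finset V'}, s ⊆ t → Φ s ⊆ Φ t)
    (hm' : ∀ {s t : Finset V}, s ⊆ t → Φ' s ⊆ Φ' t)
    (hcl : ∀ s : Finset V', Γ'.IsClique ↑s → Γ.IsClique ↑(Φ s))
    (hcl' : ∀ t : Finset V, Γ.IsClique ↑t → Γ'.IsClique ↑(Φ' t))
    (hcard : ∀ s : Finset V', s.card ≤ (Φ s).card)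
    (hcard' : ∀ t : Finset V, t.card ≤ (Φ' t).card)
    (hsub : ∀ s : Finset V', s ⊆ Φ' (Φ s))
    {M : Finset V'} (hMc : Γ'.IsClique ↑M)
    (hMm : ∀ t : Finset V', Γ'.IsClique ↑t → M ⊆ t → t = M) :
    Φ' (Φ M) = M ∧ (Γ.IsClique ↑(Φ M) ∧
      ∀ t : Finset V, Γ.IsClique ↑t → Φ M ⊆ t → t = Φ M) := by
  have hPhiM : Γ.IsClique ↑(Φ M) := hcl M hMc
  have hfix : Φ' (Φ M) = M := hMm _ (hcl' _ hPhiM) (hsub M)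
  refine ⟨hfix, hPhiM, fun t ht hsubt => ?_⟩
  have h1 : Φ' t = M := by
    have : M ⊆ Φ' t := by
      rw [← hfix]
      exact hm' hsubt
    exact hMm _ (hcl' t ht) this
  have h2 : t.card ≤ M.card := h1 ▸ hcard' t
  have h3 : (Φ M).card ≤ t.card := Finset.card_le_card hsubt
  exact (Finset.eq_of_subset_of_card_le hsubt (le_trans h2 (hcard M))).symm

/-- The purely combinatorial endgame. -/
lemma graph_iso_of_phi (Φ : Finset V' → Finset V) (Φ' : Finset V → Finset V')
    (hm : ∀ {s t : Finset V'}, s ⊆ t → Φ s ⊆ Φ t)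
    (hm' : ∀ {s t : Finset V}, s ⊆ t → Φ' s ⊆ Φ' t)
    (hcl : ∀ s : Finset V', Γ'.IsClique ↑s → Γ.IsClique ↑(Φ s))
    (hcl' : ∀ t : Finset V, Γ.IsClique ↑t → Γ'.IsClique ↑(Φ' t))
    (hcard : ∀ s : Finset V', s.card ≤ (Φ s).card)
    (hcard' : ∀ t : Finset V, t.card ≤ (Φ' t).card)
    (hsub : ∀ s : Finset V', s ⊆ Φ' (Φ s))
    (hsub' : ∀ t : Finset V, t ⊆ Φ (Φ' t)) :
    Nonempty (Γ' ≃g Γ) := by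
  set isMax' := fun M : Finset V' =>
    Γ'.IsClique ↑M ∧ ∀ t : Finset V', Γ'.IsClique ↑t → M ⊆ t → t = M with hisMax'
  set isMax := fun M : Finset V =>
    Γ.IsClique ↑M ∧ ∀ t : Finset V, Γ.IsClique ↑t → M ⊆ t → t = M with hisMax
  have trans1 : ∀ {M : Finset V'}, isMax' M → Φ' (Φ M) = M ∧ isMax (Φ M) :=
    fun hM => maxclique_transfer Φ Φ' (fun h => hm h) (fun h => hm' h)
      hcl hcl' hcard hcard' hsub hM.1 hM.2
  have trans2 : ∀ {M : Finset V}, isMax M → Φ (Φ' M) = M ∧ isMax' (Φ' M) :=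
    fun hM => maxclique_transfer Φ' Φ (fun h => hm' h) (fun h => hm h)
      hcl' hcl hcard' hcard hsub' hM.1 hM.2
  -- the key cardinality identity for intersections of maximal cliques
  have keycard : ∀ J : Finset (Finset V'), (∀ M ∈ J, isMax' M) →
      (J.inf id).card = (J.inf Φ).card := by
    intro J hJ
    have h1 : Φ (J.inf id) ⊆ J.inf Φ :=
      Finset.le_inf fun M hM => hm (Finset.inf_le hM)
    have h2 : Φ' (J.inf Φ) ⊆ J.inf id :=
      Finset.le_inf fun M hM => by
        have := hm' (Finset.inf_le hM : J.inf Φ ⊆ Φ M)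
        rwa [(trans1 (hJ M hM)).1] at this
    have c1 : (J.inf id).card ≤ (J.inf Φ).card :=
      le_trans (hcard _) (Finset.card_le_card h1)
    have c2 : (J.inf Φ).card ≤ (J.inf id).card :=
      le_trans (hcard' _) (Finset.card_le_card h2)
    omega
  set I : Finset (Finset V') := Finset.univ.filter isMax' with hI
  set t' : V' → Finset (Finset V') := fun v => I.filter (fun M => v ∈ M) with ht'
  set tt : V → Finset (Finset V') := fun x => I.filter (fun M => x ∈ Φ M) with htt
  have ht'sub : ∀ v, t' v ⊆ I := fun v => Finset.filter_subset _ _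
  have httsub : ∀ x, tt x ⊆ I := fun x => Finset.filter_subset _ _
  have ht'ne : ∀ v, (t' v).Nonempty := by
    intro v
    obtain ⟨M, hM, hvM⟩ := exists_max_clique ({v} : Finset V')
      (by rw [Finset.coe_singleton]; exact Γ'.isClique_singleton v)
    refine ⟨M, ?_⟩
    simp only [ht', Finset.mem_filter, hI, Finset.mem_univ, true_and]
    exact ⟨hM, hvM (Finset.mem_singleton_self v)⟩
  have httne : ∀ x, (tt x).Nonempty := by
    intro x
    obtain ⟨M, hM, hxM⟩ := exists_max_clique ({x} : Finset V)
      (by rw [Finset.coe_singleton]; exact Γ.isClique_singleton x)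
    refine ⟨Φ' M, ?_⟩
    have h2 := trans2 hM
    simp only [htt, Finset.mem_filter, hI, Finset.mem_univ, true_and]
    exact ⟨h2.2, by rw [h2.1]; exact hxM (Finset.mem_singleton_self x)⟩
  -- counting vertices with type containing a given set of maximal cliques
  have hJcount : ∀ J : Finset (Finset V'), J ⊆ I →
      (Finset.univ.filter (fun v => J ⊆ t' v)).card
        = (Finset.univ.filter (fun x => J ⊆ tt x)).card := by
    intro J hJI
    have hJ : ∀ M ∈ J, isMax' M := fun M hM => by
      have := hJI hM
      simpa [hI] using this
    have e1 : Finset.univ.filter (fun v => J ⊆ t' v) = J.inf id := by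
      ext v
      simp only [Finset.mem_filter, Finset.mem_univ, true_and, finset_mem_inf, id]
      constructor
      · intro h M hM
        have := h hM
        simp only [ht', Finset.mem_filter] at this
        exact this.2
      · intro h M hM
        simp only [ht', Finset.mem_filter]
        exact ⟨hJI hM, h M hM⟩
    have e2 : Finset.univ.filter (fun x => J ⊆ tt x) = J.inf Φ := by
      ext x
      simp only [Finset.mem_filter, Finset.mem_univ, true_and, finset_mem_inf]
      constructor
      · intro h M hM
        have := h hM
        simp only [htt, Finset.mem_filter] at this
        exact this.2
      · intro h M hM
        simp only [htt, Finset.mem_filter]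
        exact ⟨hJI hM, h M hM⟩
    rw [e1, e2]
    exact keycard J hJ
  -- the fiberwise (Venn cell) counting
  have hcell : ∀ J : Finset (Finset V'),
      (Finset.univ.filter (fun v => t' v = J)).card
        = (Finset.univ.filter (fun x => tt x = J)).card := by
    have main : ∀ n : ℕ, ∀ J : Finset (Finset V'), J ⊆ I → I.card - J.card ≤ n →
        (Finset.univ.filter (fun v => t' v = J)).card
          = (Finset.univ.filter (fun x => tt x = J)).card := by
      have topcase :
          (Finset.univ.filter (fun v => t' v = I)).card
            = (Finset.univ.filter (fun x => tt x = I)).card := by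
        have l : Finset.univ.filter (fun v => t' v = I)
            = Finset.univ.filter (fun v => I ⊆ t' v) := by
          apply Finset.filter_congr
          intro v _
          exact ⟨fun hv => by rw [hv], fun hv => Finset.Subset.antisymm (ht'sub v) hv⟩
        have r : Finset.univ.filter (fun x => tt x = I)
            = Finset.univ.filter (fun x => I ⊆ tt x) := by
          apply Finset.filter_congr
          intro x _
          exact ⟨fun hx => by rw [hx], fun hx => Finset.Subset.antisymm (httsub x) hx⟩
        rw [l, r]
        exact hJcount I le_rfl
      intro n
      induction n with
      | zero =>
        intro J hJI hn
        have hJeq : J = I := Finset.eq_of_subset_of_card_le hJI (by omega)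
        rw [hJeq]
        exact topcase
      | succ n ih =>
        intro J hJI hn
        by_cases hJeq : J = I
        · rw [hJeq]
          exact topcase
        · have hd1 := card_filter_fiber_sum t' I J ht'sub
          have hd2 := card_filter_fiber_sum tt I J httsub
          have hsumeq : ∑ K ∈ ((I.powerset.filter (fun K => J ⊆ K)).erase J),
              (Finset.univ.filter (fun v => t' v = K)).card
              = ∑ K ∈ ((I.powerset.filter (fun K => J ⊆ K)).erase J),
              (Finset.univ.filter (fun x => tt x = K)).card := by
            refine Finset.sum_congr rfl fun K hK => ?_
            have hK' := Finset.mem_of_mem_erase hK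
            have hKne := Finset.ne_of_mem_erase hK
            simp only [Finset.mem_filter, Finset.mem_powerset] at hK'
            have hJK : J ⊂ K := Finset.ssubset_iff_subset_ne.2 ⟨hK'.2, hKne.symm⟩
            have hcardlt : J.card < K.card := Finset.card_lt_card hJK
            have hKI : K.card ≤ I.card := Finset.card_le_card hK'.1
            exact ih K hK'.1 (by omega)
          have hJmem : J ∈ I.powerset.filter (fun K => J ⊆ K) := by
            simp only [Finset.mem_filter, Finset.mem_powerset]
            exact ⟨hJI, le_rfl⟩
          have e1 : (Finset.univ.filter (fun v => t' v = J)).card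
              + ∑ K ∈ ((I.powerset.filter (fun K => J ⊆ K)).erase J),
                (Finset.univ.filter (fun v => t' v = K)).card
              = ∑ K ∈ I.powerset.filter (fun K => J ⊆ K),
                (Finset.univ.filter (fun v => t' v = K)).card :=
            Finset.add_sum_erase _ (fun K =>
              (Finset.univ.filter (fun v => t' v = K)).card) hJmem
          have e2 : (Finset.univ.filter (fun x => tt x = J)).card
              + ∑ K ∈ ((I.powerset.filter (fun K => J ⊆ K)).erase J),
                (Finset.univ.filter (fun x => tt x = K)).card
              = ∑ K ∈ I.powerset.filter (fun K => J ⊆ K),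
                (Finset.univ.filter (fun x => tt x = K)).card :=
            Finset.add_sum_erase _ (fun K =>
              (Finset.univ.filter (fun x => tt x = K)).card) hJmem
          have h0 := hJcount J hJI
          omega
    intro J
    by_cases hJI : J ⊆ I
    · exact main (I.card - J.card) J hJI le_rfl
    · have l : Finset.univ.filter (fun v => t' v = J) = ∅ := by
        rw [Finset.filter_eq_empty_iff]
        intro v _ hv
        exact hJI (hv ▸ ht'sub v)
      have r : Finset.univ.filter (fun x => tt x = J) = ∅ := by
        rw [Finset.filter_eq_empty_iff]
        intro x _ hx
        exact hJI (hx ▸ httsub x)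
      rw [l, r]
      rfl
  -- build the vertex bijection from equinumerous cells
  have fibeq : ∀ J : Finset (Finset V'),
      Fintype.card {v // t' v = J} = Fintype.card {x // tt x = J} := by
    intro J
    rw [Fintype.card_subtype, Fintype.card_subtype]
    exact hcell J
  let σ : V' ≃ V := Equiv.ofFiberEquiv (f := t') (g := tt)
    (fun J => Fintype.equivOfCardEq (fibeq J))
  have hσ : ∀ v, tt (σ v) = t' v := fun v => Equiv.ofFiberEquiv_map _ v
  refine ⟨⟨σ, fun {u w} => ⟨fun h => ?_, fun h => ?_⟩⟩⟩
  · -- from Γ.Adj (σ u) (σ w) deduce Γ'.Adj u w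
    obtain ⟨M, hM, hMp⟩ := exists_max_clique ({σ u, σ w} : Finset V)
      (finset_pair_clique h)
    have h2 := trans2 hM
    have hmem : Φ' M ∈ tt (σ u) ∧ Φ' M ∈ tt (σ w) := by
      constructor <;>
      · simp only [htt, Finset.mem_filter, hI, Finset.mem_univ, true_and]
        refine ⟨h2.2, ?_⟩
        rw [h2.1]
        apply hMp
        simp
    have hu : u ∈ Φ' M := by
      have := hmem.1
      rw [hσ u] at this
      simp only [ht', Finset.mem_filter] at this
      exact this.2
    have hw : w ∈ Φ' M := by
      have := hmem.2
      rw [hσ w] at this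
      simp only [ht', Finset.mem_filter] at this
      exact this.2
    have huw : u ≠ w := by
      intro hc
      exact h.ne (by rw [hc])
    exact h2.2.1 (Finset.mem_coe.2 hu) (Finset.mem_coe.2 hw) huw
  · -- from Γ'.Adj u w deduce Γ.Adj (σ u) (σ w)
    obtain ⟨M, hM, hMp⟩ := exists_max_clique ({u, w} : Finset V')
      (finset_pair_clique h)
    have hMI : M ∈ I := by
      simp only [hI, Finset.mem_filter, Finset.mem_univ, true_and]
      exact hM
    have h1 : M ∈ t' u := by
      simp only [ht', Finset.mem_filter]
      exact ⟨hMI, hMp (by simp)⟩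
    have h2 : M ∈ t' w := by
      simp only [ht', Finset.mem_filter]
      exact ⟨hMI, hMp (by simp)⟩
    have hu : σ u ∈ Φ M := by
      have := h1
      rw [← hσ u] at this
      simp only [htt, Finset.mem_filter] at this
      exact this.2
    have hw : σ w ∈ Φ M := by
      have := h2
      rw [← hσ w] at this
      simp only [htt, Finset.mem_filter] at this
      exact this.2
    exact (trans1 hM).2.1 (Finset.mem_coe.2 hu) (Finset.mem_coe.2 hw)
      (σ.injective.ne h.ne)

end S9
section S10
variable {V V' : Type*} [Fintype V] [Fintype V'] [DecidableEq V] [DecidableEq V']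
  {Γ : SimpleGraph V} {Γ' : SimpleGraph V'}

lemma sum_single_apply (s : Finset V) (w : V) :
    (∑ v ∈ s, (Pi.single v (1 : ZMod 2) : V → ZMod 2)) w = if w ∈ s then 1 else 0 := by
  rw [Finset.sum_apply]
  have h1 : ∀ v : V, (Pi.single v (1 : ZMod 2) : V → ZMod 2) w = if v = w then 1 else 0 := by
    intro v; by_cases h : v = w <;> simp [Pi.single_apply, h]
  simp_rw [h1]
  rw [Finset.sum_ite_eq']

lemma spt_sum_single (s : Finset V) :
    spt (∑ v ∈ s, (Pi.single v (1 : ZMod 2) : V → ZMod 2)) = s := by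
  ext w
  rw [mem_spt, sum_single_apply]
  by_cases h : w ∈ s <;> simp [h]

/-- Number of vectors with support inside `T` is `2 ^ |T|`. -/
lemma card_spt_subset (T : Finset V) :
    (Finset.univ.filter (fun x : V → ZMod 2 => spt x ⊆ T)).card = 2 ^ T.card := by
  rw [← Finset.card_powerset]
  apply Finset.card_bij (fun x _ => spt x)
  · intro x hx
    simp only [Finset.mem_filter] at hx
    exact Finset.mem_powerset.2 hx.2
  · intro x hx y hy hxy
    rw [← sum_single_spt x, ← sum_single_spt y, hxy]
  · intro B hB
    refine ⟨∑ v ∈ B, (Pi.single v (1 : ZMod 2) : V → ZMod 2), ?_, spt_sum_single B⟩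
    simp only [Finset.mem_filter, Finset.mem_univ, true_and, spt_sum_single]
    exact Finset.mem_powerset.1 hB

/-- Three-vector lemma: if `a`, `b`, `a+b` are all clique vectors then the union of
the supports of `a` and `b` is a clique. -/
lemma clique_union_three {a b : V → ZMod 2} (ha : Γ.IsClique ↑(spt a))
    (hb : Γ.IsClique ↑(spt b)) (hab : Γ.IsClique ↑(spt (a + b))) :
    Γ.IsClique ↑(spt a ∪ spt b) := by
  intro x hx y hy hxy
  simp only [Finset.coe_union, Set.mem_union, Finset.mem_coe] at hx hy
  by_cases hxa : x ∈ spt a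
  · by_cases hya : y ∈ spt a
    · exact ha (Finset.mem_coe.2 hxa) (Finset.mem_coe.2 hya) hxy
    · have hyb : y ∈ spt b := hy.resolve_left hya
      by_cases hxb : x ∈ spt b
      · exact hb (Finset.mem_coe.2 hxb) (Finset.mem_coe.2 hyb) hxy
      · -- x ∈ a \ b , y ∈ b \ a : both in spt (a+b)
        have hx' : x ∈ spt (a + b) := by
          rw [mem_spt, Pi.add_apply, not_not.1 (fun h => hxb (mem_spt.2 h)), add_zero]
          exact mem_spt.1 hxa
        have hy' : y ∈ spt (a + b) := by
          rw [mem_spt, Pi.add_apply, not_not.1 (fun h => hya (mem_spt.2 h)), zero_add]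
          exact mem_spt.1 hyb
        exact hab (Finset.mem_coe.2 hx') (Finset.mem_coe.2 hy') hxy
  · have hxb : x ∈ spt b := hx.resolve_left hxa
    by_cases hyb : y ∈ spt b
    · exact hb (Finset.mem_coe.2 hxb) (Finset.mem_coe.2 hyb) hxy
    · have hya : y ∈ spt a := hy.resolve_right hyb
      have hx' : x ∈ spt (a + b) := by
        rw [mem_spt, Pi.add_apply, not_not.1 (fun h => hxa (mem_spt.2 h)), zero_add]
        exact mem_spt.1 hxb
      have hy' : y ∈ spt (a + b) := by
        rw [mem_spt, Pi.add_apply, not_not.1 (fun h => hyb (mem_spt.2 h)), add_zero]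
        exact mem_spt.1 hya
      exact hab (Finset.mem_coe.2 hx') (Finset.mem_coe.2 hy') hxy

lemma spt_single_add {u w : V'} (huw : u ≠ w) :
    spt ((Pi.single u (1 : ZMod 2) : V' → ZMod 2) + Pi.single w 1) = {u, w} := by
  ext x
  rw [mem_spt, Pi.add_apply, Finset.mem_insert, Finset.mem_singleton]
  by_cases hu : x = u
  · subst hu
    rw [Pi.single_eq_same, Pi.single_eq_of_ne huw, add_zero]
    simp
  · by_cases hw : x = w
    · subst hw
      rw [Pi.single_eq_same, Pi.single_eq_of_ne hu, zero_add]
      simp [hu]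
    · rw [Pi.single_eq_of_ne hu, Pi.single_eq_of_ne hw, add_zero]
      simp [hu, hw]

/-- The support-union map induced by an additive equivalence. -/
def PhiA (E : (V' → ZMod 2) ≃+ (V → ZMod 2)) : Finset V' → Finset V :=
  fun s => s.biUnion (fun u => spt (E (Pi.single u 1)))

lemma PhiA_mono (E : (V' → ZMod 2) ≃+ (V → ZMod 2)) {s t : Finset V'} (h : s ⊆ t) :
    PhiA E s ⊆ PhiA E t :=
  Finset.biUnion_subset_biUnion_of_subset_left _ h

lemma spt_map_subset (E : (V' → ZMod 2) ≃+ (V → ZMod 2)) (c : V' → ZMod 2) :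
    spt (E c) ⊆ PhiA E (spt c) := by
  conv_lhs => rw [← sum_single_spt c]
  rw [map_sum]
  exact spt_sum_subset _ _

lemma PhiA_clique (E : (V' → ZMod 2) ≃+ (V → ZMod 2))
    (hE : ∀ c, Γ'.IsClique ↑(spt c) → Γ.IsClique ↑(spt (E c)))
    (s : Finset V') (hs : Γ'.IsClique ↑s) : Γ.IsClique ↑(PhiA E s) := by
  intro x hx y hy hxy
  simp only [PhiA, Finset.coe_biUnion, Set.mem_iUnion, Finset.mem_coe] at hx hy
  obtain ⟨u, hu, hxu⟩ := hx
  obtain ⟨w, hw, hyw⟩ := hy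
  have hsingle : ∀ z : V', Γ'.IsClique ↑(spt (Pi.single z (1 : ZMod 2) : V' → ZMod 2)) := by
    intro z
    rw [spt_single, Finset.coe_singleton]
    exact Γ'.isClique_singleton z
  by_cases huw : u = w
  · subst huw
    exact hE _ (hsingle u) (Finset.mem_coe.2 hxu) (Finset.mem_coe.2 hyw) hxy
  · have hadj : Γ'.Adj u w := hs (Finset.mem_coe.2 hu) (Finset.mem_coe.2 hw) huw
    have hpair : Γ'.IsClique ↑(spt ((Pi.single u (1:ZMod 2) : V' → ZMod 2) + Pi.single w 1)) := by
      rw [spt_single_add huw]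
      exact finset_pair_clique hadj
    have hsum : Γ.IsClique ↑(spt (E (Pi.single u 1) + E (Pi.single w 1))) := by
      rw [← map_add]
      exact hE _ hpair
    have hcl := clique_union_three (hE _ (hsingle u)) (hE _ (hsingle w)) hsum
    exact hcl (Finset.mem_coe.2 (Finset.mem_union.2 (Or.inl hxu)))
      (Finset.mem_coe.2 (Finset.mem_union.2 (Or.inr hyw))) hxy

lemma PhiA_card (E : (V' → ZMod 2) ≃+ (V → ZMod 2)) (s : Finset V') :
    s.card ≤ (PhiA E s).card := by
  have key : (2:ℕ) ^ s.card ≤ 2 ^ (PhiA E s).card := by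
    rw [← Finset.card_powerset, ← card_spt_subset (PhiA E s)]
    apply Finset.card_le_card_of_injOn
      (fun B => E (∑ v ∈ B, (Pi.single v (1 : ZMod 2) : V' → ZMod 2)))
    · intro B hB
      simp only [Finset.mem_coe, Finset.mem_filter, Finset.mem_univ, true_and]
      refine (spt_map_subset E _).trans ?_
      rw [spt_sum_single]
      exact PhiA_mono E (Finset.mem_powerset.1 hB)
    · intro B hB C hC hBC
      have h1 := E.injective hBC
      have h2 := congrArg spt h1
      rwa [spt_sum_single, spt_sum_single] at h2
  exact (Nat.pow_le_pow_iff_right (by norm_num)).1 key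

lemma PhiA_sub (E : (V' → ZMod 2) ≃+ (V → ZMod 2)) (s : Finset V') :
    s ⊆ PhiA E.symm (PhiA E s) := by
  intro u hu
  have h1 : spt (E.symm (E (Pi.single u 1))) ⊆ PhiA E.symm (spt (E (Pi.single u 1))) :=
    spt_map_subset E.symm _
  have h0 : spt (E (Pi.single u (1:ZMod 2))) ⊆ PhiA E s := by
    unfold PhiA
    exact Finset.subset_biUnion_of_mem (fun u => spt (E (Pi.single u 1))) hu
  have h2 : PhiA E.symm (spt (E (Pi.single u (1:ZMod 2)))) ⊆ PhiA E.symm (PhiA E s) :=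
    PhiA_mono E.symm h0
  have h3 : u ∈ spt (E.symm (E (Pi.single u (1:ZMod 2)))) := by
    rw [E.symm_apply_apply, spt_single]
    exact Finset.mem_singleton_self u
  exact h2 (h1 h3)

/-- From an additive equivalence preserving clique vectors both ways, the graphs
are isomorphic. -/
lemma iso_of_cliquemap_equiv (A : (V' → ZMod 2) ≃+ (V → ZMod 2))
    (hA : ∀ c, Γ'.IsClique ↑(spt c) → Γ.IsClique ↑(spt (A c)))
    (hA' : ∀ b, Γ.IsClique ↑(spt b) → Γ'.IsClique ↑(spt (A.symm b))) :
    Nonempty (Γ' ≃g Γ) := by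
  have hsub' : ∀ t : Finset V, t ⊆ PhiA A (PhiA A.symm t) := by
    intro t
    have := PhiA_sub A.symm t
    rwa [AddEquiv.symm_symm] at this
  exact graph_iso_of_phi (PhiA A) (PhiA A.symm)
    (fun h => PhiA_mono A h) (fun h => PhiA_mono A.symm h)
    (PhiA_clique A hA) (PhiA_clique A.symm hA')
    (PhiA_card A) (PhiA_card A.symm)
    (PhiA_sub A) hsub'

end S10
section S11

variable {G G' K K' : Type} [Group G] [Group G'] [Group K] [Group K']
  [TopologicalSpace K] [TopologicalSpace K'] {ι : G →* K} {ι' : G' →* K'}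

/-- In a profinite group, every open neighbourhood of `1` contains an open normal
subgroup. -/
lemma exists_ons_sub (hK' : IsProPGroup 2 K') {U : Set K'} (hU : IsOpen U) (h1 : (1:K') ∈ U) :
    ∃ N : OpenNormalSubgroup K', (N : Set K') ⊆ U := by
  haveI := hK'.topGroup
  haveI := hK'.compact
  haveI := hK'.t2
  haveI := hK'.totallyDisconnected
  obtain ⟨W, hW, h1W, hWU⟩ := compact_exists_isClopen_in_isOpen hU h1
  obtain ⟨N, hN⟩ := IsTopologicalGroup.exist_openNormalSubgroup_sub_clopen_nhds_of_one hW h1W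
  exact ⟨N, hN.trans hWU⟩

lemma ons_separates (hK' : IsProPGroup 2 K') {x y : K'}
    (h : ∀ N : OpenNormalSubgroup K', QuotientGroup.mk' N.toSubgroup x
      = QuotientGroup.mk' N.toSubgroup y) : x = y := by
  haveI := hK'.topGroup
  haveI := hK'.compact
  haveI := hK'.t2
  by_contra hxy
  have hne : x⁻¹ * y ≠ 1 := by
    intro hc
    exact hxy (by rw [← mul_one x, ← hc, ← mul_assoc, mul_inv_cancel, one_mul])
  have hopen : IsOpen ({x⁻¹ * y}ᶜ : Set K') := isOpen_compl_singleton
  obtain ⟨N, hN⟩ := exists_ons_sub hK' hopen (by simpa using (Ne.symm hne))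
  have hmem : x⁻¹ * y ∈ N.toSubgroup := QuotientGroup.eq.1 (h N)
  exact hN hmem rfl

/-- Existence of a continuous homomorphism between pro-2 completions lifting a
homomorphism of the discrete groups. -/
lemma exists_continuous_hom (hK : IsProPCompletion 2 G K ι) (hK' : IsProPCompletion 2 G' K' ι')
    (f : G →* G') : ∃ F : K →* K', Continuous F ∧ F.comp ι = ι'.comp f := by
  classical
  haveI := hK'.proP.topGroup
  haveI := hK'.proP.compact
  haveI := hK'.proP.t2
  haveI := hK'.proP.totallyDisconnected
  -- the per-quotient liftings
  have data : ∀ N : OpenNormalSubgroup K', ∃ φ : K →* K' ⧸ N.toSubgroup,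
      (∀ q, IsOpen (φ ⁻¹' {q})) ∧
      φ.comp ι = (QuotientGroup.mk' N.toSubgroup).comp (ι'.comp f) ∧
      (∀ ψ : K →* K' ⧸ N.toSubgroup, (∀ q, IsOpen (ψ ⁻¹' {q})) →
        ψ.comp ι = (QuotientGroup.mk' N.toSubgroup).comp (ι'.comp f) → ψ = φ) := by
    intro N
    letI : TopologicalSpace (K' ⧸ N.toSubgroup) := ⊥
    haveI : DiscreteTopology (K' ⧸ N.toSubgroup) := ⟨rfl⟩
    haveI : Finite (K' ⧸ N.toSubgroup) :=
      N.toSubgroup.quotient_finite_of_isOpen N.toOpenSubgroup.isOpen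
    have hp : IsPGroup 2 (K' ⧸ N.toSubgroup) :=
      hK'.proP.quot_isPGroup N.toSubgroup N.toOpenSubgroup.isOpen
    obtain ⟨φ, ⟨hc, hcomp⟩, huniq⟩ := hK.universal (K' ⧸ N.toSubgroup) hp
      ((QuotientGroup.mk' N.toSubgroup).comp (ι'.comp f))
    refine ⟨φ, fun q => (isOpen_discrete _).preimage hc, hcomp,
      fun ψ hψc hψcomp => huniq ψ ⟨?_, hψcomp⟩⟩
    rw [continuous_discrete_rng]
    intro b
    exact hψc b
  choose φ hφopen hφcomp hφuniq using data
  -- compatibility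
  have compat : ∀ (N M : OpenNormalSubgroup K') (h : N.toSubgroup ≤ M.toSubgroup),
      (QuotientGroup.map N.toSubgroup M.toSubgroup (MonoidHom.id K')
        (fun x hx => h hx)).comp (φ N) = φ M := by
    intro N M h
    apply hφuniq M
    · intro q
      have : ((QuotientGroup.map N.toSubgroup M.toSubgroup (MonoidHom.id K')
          (fun x hx => h hx)).comp (φ N)) ⁻¹' {q}
          = φ N ⁻¹' ((QuotientGroup.map N.toSubgroup M.toSubgroup (MonoidHom.id K')
            (fun x hx => h hx)) ⁻¹' {q}) := rfl
      rw [this, ← Set.biUnion_of_singleton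
        ((QuotientGroup.map N.toSubgroup M.toSubgroup (MonoidHom.id K')
          (fun x hx => h hx)) ⁻¹' {q}), Set.preimage_iUnion₂]
      exact isOpen_biUnion (fun p _ => hφopen N p)
    · have hmapmk : (QuotientGroup.map N.toSubgroup M.toSubgroup (MonoidHom.id K')
          (fun x hx => h hx)).comp (QuotientGroup.mk' N.toSubgroup)
          = QuotientGroup.mk' M.toSubgroup := by
        ext x
        simpa using QuotientGroup.map_mk' (N := N.toSubgroup) M.toSubgroup (MonoidHom.id K') (fun x hx => h hx) x
      rw [MonoidHom.comp_assoc, hφcomp N, ← MonoidHom.comp_assoc, hmapmk]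
  -- the pointwise limit
  haveI : Nonempty (OpenNormalSubgroup K') :=
    ⟨{ toOpenSubgroup := ⊤,
       isNormal' := by
        show ((⊤ : Subgroup K')).Normal
        infer_instance }⟩
  have exist_e : ∀ k : K, ∃ y : K',
      ∀ N : OpenNormalSubgroup K', QuotientGroup.mk' N.toSubgroup y = φ N k := by
    intro k
    set C : OpenNormalSubgroup K' → Set K' :=
      fun N => (QuotientGroup.mk' N.toSubgroup) ⁻¹' {φ N k} with hC
    have hCne : ∀ N, (C N).Nonempty := by
      intro N
      obtain ⟨y, hy⟩ := QuotientGroup.mk'_surjective N.toSubgroup (φ N k)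
      exact ⟨y, hy⟩
    have hCcoset : ∀ N, ∃ y₀ : K', C N = (fun y => y₀⁻¹ * y) ⁻¹' (N : Set K') := by
      intro N
      obtain ⟨y₀, hy₀⟩ := hCne N
      refine ⟨y₀, ?_⟩
      ext y
      simp only [hC, Set.mem_preimage, Set.mem_singleton_iff, SetLike.mem_coe]
      rw [← hy₀]
      show (y : K' ⧸ N.toSubgroup) = (y₀ : K' ⧸ N.toSubgroup) ↔ _
      rw [eq_comm, QuotientGroup.eq]
      rfl
    have hCcl : ∀ N, IsClosed (C N) := by
      intro N
      obtain ⟨y₀, hy₀⟩ := hCcoset N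
      rw [hy₀]
      exact N.toOpenSubgroup.isClosed.preimage (continuous_const.mul continuous_id)
    have hCdir : Directed (· ⊇ ·) C := by
      intro N M
      refine ⟨N ⊓ M, ?_, ?_⟩
      · intro y hy
        have h1 : (N ⊓ M).toSubgroup ≤ N.toSubgroup := fun x hx => hx.1
        have h2 := DFunLike.congr_fun (compat (N ⊓ M) N h1) k
        simp only [MonoidHom.coe_comp, Function.comp_apply] at h2
        simp only [hC, Set.mem_preimage, Set.mem_singleton_iff] at hy ⊢
        rw [← h2, ← hy]
        have h3 := QuotientGroup.map_mk' (N := (N ⊓ M).toSubgroup) N.toSubgroup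
          (MonoidHom.id K') (fun x hx => h1 hx) y
        simpa using h3.symm
      · intro y hy
        have h1 : (N ⊓ M).toSubgroup ≤ M.toSubgroup := fun x hx => hx.2
        have h2 := DFunLike.congr_fun (compat (N ⊓ M) M h1) k
        simp only [MonoidHom.coe_comp, Function.comp_apply] at h2
        simp only [hC, Set.mem_preimage, Set.mem_singleton_iff] at hy ⊢
        rw [← h2, ← hy]
        have h3 := QuotientGroup.map_mk' (N := (N ⊓ M).toSubgroup) M.toSubgroup
          (MonoidHom.id K') (fun x hx => h1 hx) y
        simpa using h3.symm
    have hCcp : ∀ N, IsCompact (C N) := fun N => (hCcl N).isCompact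
    obtain ⟨y, hy⟩ := IsCompact.nonempty_iInter_of_directed_nonempty_isCompact_isClosed
      C hCdir hCne hCcp hCcl
    refine ⟨y, fun N => ?_⟩
    have := Set.mem_iInter.1 hy N
    simpa [hC] using this
  choose E hE using exist_e
  have hmul : ∀ k₁ k₂ : K, E (k₁ * k₂) = E k₁ * E k₂ := by
    intro k₁ k₂
    apply ons_separates hK'.proP
    intro N
    rw [hE (k₁ * k₂) N, map_mul, map_mul, hE k₁ N, hE k₂ N]
  let F : K →* K' := MonoidHom.mk' E hmul
  have hFι : F.comp ι = ι'.comp f := by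
    ext g
    show E (ι g) = ι' (f g)
    apply ons_separates hK'.proP
    intro N
    rw [hE (ι g) N]
    exact DFunLike.congr_fun (hφcomp N) g
  have hFcont : Continuous F := by
    rw [continuous_def]
    intro U hU
    rw [isOpen_iff_forall_mem_open]
    intro k hk
    have h1U : IsOpen ((fun y => E k * y) ⁻¹' U) :=
      hU.preimage (continuous_const.mul continuous_id)
    have h1m : (1:K') ∈ (fun y => E k * y) ⁻¹' U := by
      have hk' : E k ∈ U := hk
      simpa using hk'
    obtain ⟨N, hN⟩ := exists_ons_sub hK'.proP h1U h1m
    refine ⟨φ N ⁻¹' {φ N k}, ?_, hφopen N _, by simp⟩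
    intro k₂ hk₂
    simp only [Set.mem_preimage, Set.mem_singleton_iff] at hk₂
    have hq : QuotientGroup.mk' N.toSubgroup (E k₂) = QuotientGroup.mk' N.toSubgroup (E k) := by
      rw [hE k₂ N, hE k N, hk₂]
    have hmem : (E k)⁻¹ * E k₂ ∈ N.toSubgroup := by
      have : ((E k : K') : K' ⧸ N.toSubgroup) = (E k₂ : K' ⧸ N.toSubgroup) := hq.symm
      exact QuotientGroup.eq.1 this
    have : E k₂ ∈ U := by
      have h3 := hN hmem
      simp only [Set.mem_preimage] at h3
      rwa [← mul_assoc, mul_inv_cancel, one_mul] at h3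
    exact this
  exact ⟨F, hFcont, hFι⟩

/-- Uniqueness: two continuous homomorphisms out of a completion agreeing on the image
of the dense map are equal. -/
lemma continuous_hom_unique (hK : IsProPCompletion 2 G K ι) (hK' : IsProPGroup 2 K')
    {F₁ F₂ : K →* K'} (h1 : Continuous F₁) (h2 : Continuous F₂)
    (h : F₁.comp ι = F₂.comp ι) : F₁ = F₂ := by
  haveI := hK'.t2
  have hdense : Dense (Set.range ι) := hK.dense
  have heq : Set.EqOn ⇑F₁ ⇑F₂ (Set.range ι) := by
    rintro x ⟨g, rfl⟩
    exact DFunLike.congr_fun h g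
  have := Continuous.ext_on hdense h1 h2 heq
  exact MonoidHom.ext fun x => congrFun this x

/-- Uniqueness of pro-2 completions along an isomorphism of discrete groups. -/
lemma completion_unique (hK : IsProPCompletion 2 G K ι) (hK' : IsProPCompletion 2 G' K' ι')
    (θ : G ≃* G') : ∃ e : K ≃* K', Continuous e ∧ Continuous e.symm := by
  obtain ⟨F, hFc, hFι⟩ := exists_continuous_hom hK hK' θ.toMonoidHom
  obtain ⟨F', hF'c, hF'ι⟩ := exists_continuous_hom hK' hK θ.symm.toMonoidHom
  have hFF' : F'.comp F = MonoidHom.id K := by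
    apply continuous_hom_unique hK hK.proP (hF'c.comp hFc) continuous_id
    rw [MonoidHom.comp_assoc, hFι, ← MonoidHom.comp_assoc, hF'ι]
    ext g
    simp
  have hF'F : F.comp F' = MonoidHom.id K' := by
    apply continuous_hom_unique hK' hK'.proP (hFc.comp hF'c) continuous_id
    rw [MonoidHom.comp_assoc, hF'ι, ← MonoidHom.comp_assoc, hFι]
    ext g
    simp
  exact ⟨MonoidHom.toMulEquiv F F' hFF' hF'F, hFc, hF'c⟩

end S11
section S12
variable {V V' : Type*} {Γ : SimpleGraph V} {Γ' : SimpleGraph V'}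

/-- A graph isomorphism induces a homomorphism of right-angled Coxeter groups. -/
def racgMap (φ : Γ ≃g Γ') : RACG Γ →* RACG Γ' :=
  RACG.lift Γ (fun v => RACG.gen Γ' (φ v)) (fun v => RACG.gen_sq Γ' (φ v))
    (fun v w h => RACG.gen_comm Γ' (φ.map_rel_iff.2 h))

lemma racgMap_gen (φ : Γ ≃g Γ') (v : V) : racgMap φ (RACG.gen Γ v) = RACG.gen Γ' (φ v) :=
  RACG.lift_gen _ _ _ _ v

/-- A graph isomorphism induces an isomorphism of right-angled Coxeter groups. -/
def racgCongr (φ : Γ ≃g Γ') : RACG Γ ≃* RACG Γ' :=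
  MonoidHom.toMulEquiv (racgMap φ) (racgMap φ.symm)
    (RACG.hom_ext Γ (fun v => by
      simp only [MonoidHom.coe_comp, Function.comp_apply, racgMap_gen, MonoidHom.id_apply]
      congr 1
      exact φ.toEquiv.symm_apply_apply v))
    (RACG.hom_ext Γ' (fun u => by
      simp only [MonoidHom.coe_comp, Function.comp_apply, racgMap_gen, MonoidHom.id_apply]
      congr 1
      exact φ.toEquiv.apply_symm_apply u))

end S12

section S13

/-- The forward direction. -/
lemma racg_forward {V V' : Type} [Fintype V] [Fintype V']
    (Γ : SimpleGraph V) (Γ' : SimpleGraph V')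
    (K K' : Type) [Group K] [TopologicalSpace K] [Group K'] [TopologicalSpace K']
    (ι : RACG Γ →* K) (ι' : RACG Γ' →* K')
    (hK : IsProPCompletion 2 (RACG Γ) K ι) (hK' : IsProPCompletion 2 (RACG Γ') K' ι')
    (e : K ≃* K') (he : Continuous e) (he' : Continuous e.symm) :
    Nonempty (Γ ≃g Γ') := by
  letI : LinearOrder V := LinearOrder.lift' (Fintype.equivFin V) (Fintype.equivFin V).injective
  letI : LinearOrder V' := LinearOrder.lift' (Fintype.equivFin V') (Fintype.equivFin V').injective
  letI : DecidableRel Γ.Adj := Classical.decRel _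
  letI : DecidableRel Γ'.Adj := Classical.decRel _
  -- transfer the canonical finite 2-group quotients
  obtain ⟨h1, hs1⟩ := quotient_transfer hK hK' e he' ((canFG Γ).range)
    (IsPGroup.to_subgroup FG.isPGroup _) ((canFG Γ).rangeRestrict)
    (canFG Γ).rangeRestrict_surjective
  obtain ⟨h2, hs2⟩ := quotient_transfer hK' hK e.symm (by simpa using he) ((canFG Γ').range)
    (IsPGroup.to_subgroup FG.isPGroup _) ((canFG Γ').rangeRestrict)
    (canFG Γ').rangeRestrict_surjective
  set f1 : RACG Γ' →* FG Γ := ((canFG Γ).range.subtype).comp h1 with hf1def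
  set f2 : RACG Γ →* FG Γ' := ((canFG Γ').range.subtype).comp h2 with hf2def
  have hf1 : ∀ b : V → ZMod 2, ∃ y, (f1 y).1 = b := by
    intro b
    obtain ⟨r, hr⟩ := canFG_fst_surj Γ b
    obtain ⟨y, hy⟩ := hs1 ⟨canFG Γ r, ⟨r, rfl⟩⟩
    refine ⟨y, ?_⟩
    show (((canFG Γ).range.subtype) (h1 y)).1 = b
    rw [hy]
    exact hr
  have hf2 : ∀ b : V' → ZMod 2, ∃ y, (f2 y).1 = b := by
    intro b
    obtain ⟨r, hr⟩ := canFG_fst_surj Γ' b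
    obtain ⟨y, hy⟩ := hs2 ⟨canFG Γ' r, ⟨r, rfl⟩⟩
    refine ⟨y, ?_⟩
    show (((canFG Γ').range.subtype) (h2 y)).1 = b
    rw [hy]
    exact hr
  obtain ⟨A, hA, hA'⟩ := exists_cliquemap_equiv (alphaOf f1) (alphaOf f2)
    (alphaOf_add f1) (alphaOf_add f2) (alphaOf_surj f1 hf1) (alphaOf_surj f2 hf2)
    (alphaOf_clique f1) (alphaOf_clique f2)
  obtain ⟨iso⟩ := iso_of_cliquemap_equiv A hA hA'
  exact ⟨iso.symm⟩

end S13

/-- Right-angled Coxeter groups are distinguished by their pro-`2`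
completions: for finite graphs `Γ, Γ'`, the pro-`2` completions of `C(Γ)` and `C(Γ')`
are isomorphic as topological groups iff `Γ ≅ Γ'`. -/
theorem racg_pro2_rigidity {V V' : Type} [Fintype V] [Fintype V']
    (Γ : SimpleGraph V) (Γ' : SimpleGraph V')
    (K K' : Type) [Group K] [TopologicalSpace K] [Group K'] [TopologicalSpace K']
    (ι : RACG Γ →* K) (ι' : RACG Γ' →* K')
    (hK : IsProPCompletion 2 (RACG Γ) K ι) (hK' : IsProPCompletion 2 (RACG Γ') K' ι') :
    (∃ e : K ≃* K', Continuous e ∧ Continuous e.symm) ↔ Nonempty (Γ ≃g Γ') := by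
  constructor
  · rintro ⟨e, he, he'⟩
    exact racg_forward Γ Γ' K K' ι ι' hK hK' e he he'
  · rintro ⟨iso⟩
    exact completion_unique hK hK' (racgCongr iso)
end

section
/- Let Γ be a finite connected graph with at least one edge, and suppose the profinite completion Ĝ of G = A(Γ) acts on a profinite tree T with trivial edge stabilizers. If every element of Ẑ² acting on such a tree fixes a point whenever it is not a subgroup of Ẑ, then every vertex generator of Ĝ fixes a unique vertex of T, adjacent generators fix the same vertex, and hence by connectedness all of Ĝ fixes a vertex of T. -/
/-- A topological group is profinite if it is a compact, Hausdorff, totally disconnected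
topological group. -/
structure IsProfiniteGroup (K : Type*) [Group K] [TopologicalSpace K] : Prop where
  topGroup : IsTopologicalGroup K
  compact : CompactSpace K
  t2 : T2Space K
  totallyDisconnected : TotallyDisconnectedSpace K

/-- `ι : G →* K` exhibits the profinite group `K` as the profinite completion of the
discrete group `G`: it has dense range and every homomorphism from `G` to a finite group
(with the discrete topology) factors uniquely through `ι` as a continuous homomorphism. -/
structure IsProfiniteCompletion (G : Type*) [Group G] (K : Type*) [Group K]
    [TopologicalSpace K] (ι : G →* K) : Prop where
  profinite : IsProfiniteGroup K
  dense : DenseRange ι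
  universal : ∀ (F : Type) [Group F] [Finite F] [TopologicalSpace F] [DiscreteTopology F],
    ∀ f : G →* F, ∃! φ : K →* F, Continuous φ ∧ φ.comp ι = f

/-- A stand-in for "`A` is (isomorphic to) a closed subgroup of `Ẑ`": `A` is
topologically generated by one element and torsion-free. -/
def IsSubgroupOfZhat {K : Type*} [Group K] [TopologicalSpace K] [IsTopologicalGroup K]
    (A : Subgroup K) : Prop :=
  (∃ a ∈ A, (Subgroup.closure {a}).topologicalClosure = A) ∧
  ∀ x ∈ A, x ≠ 1 → ∀ n : ℕ, 0 < n → x ^ n ≠ 1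


section Aux

/-- Every homomorphism-candidate on generators into a commutative group extends to `RAAG`. -/
lemma raag_hom {V : Type} (Γ : SimpleGraph V) {F : Type*} [CommGroup F] (f : V → F) :
    ∃ g : RAAG Γ →* F, ∀ u, g (RAAG.gen Γ u) = f u := by
  have h : ∀ r ∈ raagRels Γ, FreeGroup.lift f r = 1 := by
    rintro r ⟨v, w, -, rfl⟩
    rw [map_commutatorElement]
    exact commutatorElement_eq_one_iff_commute.mpr (Commute.all _ _)
  exact ⟨PresentedGroup.toGroup h, fun u => PresentedGroup.toGroup.of h⟩

open scoped commutatorElement in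
/-- Adjacent generators of a RAAG commute. -/
lemma raag_gen_comm {V : Type} (Γ : SimpleGraph V) {v w : V} (h : Γ.Adj v w) :
    RAAG.gen Γ v * RAAG.gen Γ w = RAAG.gen Γ w * RAAG.gen Γ v := by
  have hmem : ⁅FreeGroup.of v, FreeGroup.of w⁆ ∈ Subgroup.normalClosure (raagRels Γ) :=
    Subgroup.subset_normalClosure ⟨v, w, h, rfl⟩
  have h1 : (PresentedGroup.mk (raagRels Γ)) ⁅FreeGroup.of v, FreeGroup.of w⁆ = 1 :=
    (QuotientGroup.eq_one_iff _).mpr hmem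
  rw [map_commutatorElement] at h1
  exact commutatorElement_eq_one_iff_commute.mp h1

lemma zpowers_cases_zmod2 {c z : Multiplicative (ZMod 2 × ZMod 2)}
    (h : z ∈ Subgroup.zpowers c) : z = 1 ∨ z = c := by
  obtain ⟨n, rfl⟩ := Subgroup.mem_zpowers_iff.mp h
  have hsq : ∀ d : Multiplicative (ZMod 2 × ZMod 2), d * d = 1 := by decide
  rcases Int.even_or_odd n with ⟨m, rfl⟩ | ⟨m, rfl⟩
  · left; rw [zpow_add]; exact hsq _
  · right
    have h2 : c ^ (2 * m : ℤ) = 1 := by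
      rw [zpow_mul]
      have : c ^ (2 : ℤ) = 1 := by
        rw [show (2 : ℤ) = 1 + 1 by norm_num, zpow_add, zpow_one]; exact hsq c
      rw [this, one_zpow]
    rw [zpow_add, h2, one_mul, zpow_one]

end Aux

/-- Let `Γ` be a finite connected graph with at least one edge and let
`Ĝ` be the profinite completion of `G = A(Γ)`, acting (continuously) on a profinite
tree `T` with trivial edge stabilizers (so no nontrivial element fixes two distinct
points). If every closed abelian subgroup of `Ĝ` either fixes a point of `T` or is a
subgroup of `Ẑ`, then every vertex generator of `Ĝ` fixes a unique vertex of `T`,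
adjacent generators fix the same vertex, and hence by connectedness all of `Ĝ` fixes a
vertex of `T`. -/
theorem raag_profinite_tree_fixed_point {V : Type} [Fintype V] [DecidableEq V]
    (Γ : SimpleGraph V) (hconn : Γ.Connected) (hedge : ∃ v w : V, Γ.Adj v w)
    (K : Type) [Group K] [TopologicalSpace K] [IsTopologicalGroup K]
    (ι : RAAG Γ →* K) (hK : IsProfiniteCompletion (RAAG Γ) K ι)
    (T : Type) [TopologicalSpace T] [CompactSpace T] [T2Space T]
    [TotallyDisconnectedSpace T] [MulAction K T]
    (hact : Continuous fun x : K × T => x.1 • x.2)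
    (hedgestab : ∀ g : K, ∀ t t' : T, g • t = t → g • t' = t' → g = 1 ∨ t = t')
    (habelian : ∀ A : Subgroup K, IsClosed (A : Set K) →
      (∀ a ∈ A, ∀ b ∈ A, a * b = b * a) →
      (∃ t : T, ∀ a ∈ A, a • t = t) ∨ IsSubgroupOfZhat A) :
    (∀ v : V, ∃! t : T, ι (RAAG.gen Γ v) • t = t) ∧
    (∀ v w : V, Γ.Adj v w →
      ∀ t : T, ι (RAAG.gen Γ v) • t = t → ι (RAAG.gen Γ w) • t = t) ∧
    ∃ t : T, ∀ g : K, g • t = t := by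
  haveI hT2K : T2Space K := hK.profinite.t2
  classical
  -- generators are nontrivial in K
  have hne : ∀ v : V, ι (RAAG.gen Γ v) ≠ 1 := by
    intro v hv
    letI : TopologicalSpace (Multiplicative (ZMod 2)) := ⊥
    haveI : DiscreteTopology (Multiplicative (ZMod 2)) := ⟨rfl⟩
    obtain ⟨f, hf⟩ := raag_hom Γ (fun u => Multiplicative.ofAdd (if u = v then (1 : ZMod 2) else 0))
    obtain ⟨φ, ⟨hφc, hφι⟩, -⟩ := hK.universal (Multiplicative (ZMod 2)) f
    have h1 : φ (ι (RAAG.gen Γ v)) = f (RAAG.gen Γ v) := DFunLike.congr_fun hφι _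
    rw [hv, map_one, hf v, if_pos rfl] at h1
    exact absurd h1.symm (by decide)
  -- adjacent generators have a common fixed point
  have key : ∀ v w : V, Γ.Adj v w →
      ∃ s : T, ι (RAAG.gen Γ v) • s = s ∧ ι (RAAG.gen Γ w) • s = s := by
    intro v w hvw
    set x := ι (RAAG.gen Γ v) with hx
    set y := ι (RAAG.gen Γ w) with hy
    have hxy : x * y = y * x := by
      rw [hx, hy, ← map_mul, ← map_mul, raag_gen_comm Γ hvw]
    set S := Subgroup.closure ({x, y} : Set K) with hS
    set A := S.topologicalClosure with hA
    have hxS : x ∈ S := Subgroup.subset_closure (by simp)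
    have hyS : y ∈ S := Subgroup.subset_closure (by simp)
    have hxA : x ∈ A := S.le_topologicalClosure hxS
    have hyA : y ∈ A := S.le_topologicalClosure hyS
    -- S is commutative
    have hSC : S ≤ Subgroup.centralizer ({x, y} : Set K) := by
      rw [hS, Subgroup.closure_le]
      intro g hg
      rcases hg with rfl | hg
      · rw [SetLike.mem_coe, Subgroup.mem_centralizer_iff]
        rintro h (rfl | hh)
        · rfl
        · rcases hh with rfl; exact hxy.symm
      · rcases hg with rfl
        rw [SetLike.mem_coe, Subgroup.mem_centralizer_iff]
        rintro h (rfl | hh)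
        · exact hxy
        · rcases hh with rfl; rfl
    have hScomm : ∀ a ∈ S, ∀ b ∈ S, a * b = b * a := by
      intro a ha b hb
      have haC := hSC ha
      have hb' : b ∈ Subgroup.centralizer ({a} : Set K) := by
        refine (Subgroup.closure_le _).mpr ?_ hb
        intro g hg
        rw [SetLike.mem_coe, Subgroup.mem_centralizer_iff]
        rintro h rfl
        exact (Subgroup.mem_centralizer_iff.mp haC g hg).symm
      exact Subgroup.mem_centralizer_iff.mp hb' a rfl
    -- A is commutative
    have step1 : ∀ a ∈ S, ∀ b ∈ A, a * b = b * a := by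
      intro a ha b hb
      have hb2 : b ∈ _root_.closure (S : Set K) := by
        rwa [← Subgroup.topologicalClosure_coe]
      exact closure_minimal (fun c hc => hScomm a ha c hc)
        (isClosed_eq (continuous_mul_left a) (continuous_mul_right a)) hb2
    have hAcomm : ∀ a ∈ A, ∀ b ∈ A, a * b = b * a := by
      intro a ha b hb
      have ha2 : a ∈ _root_.closure (S : Set K) := by
        rwa [← Subgroup.topologicalClosure_coe]
      exact closure_minimal (fun c hc => step1 c hc b hb)
        (isClosed_eq (continuous_mul_right b) (continuous_mul_left b)) ha2
    rcases habelian A S.isClosed_topologicalClosure hAcomm with ⟨t, ht⟩ | hsub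
    · exact ⟨t, ht x hxA, ht y hyA⟩
    · exfalso
      obtain ⟨⟨a, haA, hgen⟩, -⟩ := hsub
      letI : TopologicalSpace (Multiplicative (ZMod 2 × ZMod 2)) := ⊥
      haveI : DiscreteTopology (Multiplicative (ZMod 2 × ZMod 2)) := ⟨rfl⟩
      obtain ⟨f, hf⟩ := raag_hom Γ (fun u =>
        Multiplicative.ofAdd ((if u = v then (1 : ZMod 2) else 0,
          if u = w then (1 : ZMod 2) else 0) : ZMod 2 × ZMod 2))
      obtain ⟨φ, ⟨hφc, hφι⟩, -⟩ := hK.universal (Multiplicative (ZMod 2 × ZMod 2)) f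
      have hφx : φ x = Multiplicative.ofAdd ((1 : ZMod 2), (0 : ZMod 2)) := by
        have h1 : φ (ι (RAAG.gen Γ v)) = f (RAAG.gen Γ v) := DFunLike.congr_fun hφι _
        rw [hf v, if_pos rfl, if_neg hvw.ne] at h1
        exact h1
      have hφy : φ y = Multiplicative.ofAdd ((0 : ZMod 2), (1 : ZMod 2)) := by
        have h1 : φ (ι (RAAG.gen Γ w)) = f (RAAG.gen Γ w) := DFunLike.congr_fun hφι _
        rw [hf w, if_pos rfl, if_neg hvw.ne'] at h1
        exact h1
      have hcl : A ≤ Subgroup.comap φ (Subgroup.zpowers (φ a)) := by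
        rw [← hgen]
        refine Subgroup.topologicalClosure_minimal _ ?_ ?_
        · rw [Subgroup.closure_le]
          intro g hg
          rcases hg with rfl
          exact Subgroup.mem_zpowers _
        · have hcls : IsClosed (⇑φ ⁻¹' (Subgroup.zpowers (φ a) : Set _)) :=
            (isClosed_discrete _).preimage hφc
          rwa [Subgroup.coe_comap]
      have h1 := zpowers_cases_zmod2 (hcl hxA)
      have h2 := zpowers_cases_zmod2 (hcl hyA)
      rcases h1 with h1 | h1
      · rw [hφx] at h1; exact absurd h1 (by decide)
      · rcases h2 with h2 | h2
        · rw [hφy] at h2; exact absurd h2 (by decide)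
        · rw [hφx] at h1; rw [hφy] at h2
          have : Multiplicative.ofAdd ((1 : ZMod 2), (0 : ZMod 2)) =
              Multiplicative.ofAdd ((0 : ZMod 2), (1 : ZMod 2)) := h1.trans h2.symm
          exact absurd this (by decide)
  -- uniqueness of fixed points
  have uniq : ∀ (v : V) (t t' : T), ι (RAAG.gen Γ v) • t = t → ι (RAAG.gen Γ v) • t' = t' →
      t = t' := fun v t t' h h' => (hedgestab _ t t' h h').resolve_left (hne v)
  -- every vertex has a neighbor
  have hasNbr : ∀ v : V, ∃ w : V, Γ.Adj v w := by
    intro v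
    obtain ⟨a, b, hab⟩ := hedge
    obtain ⟨p⟩ := hconn v a
    cases p with
    | nil => exact ⟨b, hab⟩
    | cons h q => exact ⟨_, h⟩
  -- adjacency transfer
  have trans : ∀ v w : V, Γ.Adj v w → ∀ t : T,
      ι (RAAG.gen Γ v) • t = t → ι (RAAG.gen Γ w) • t = t := by
    intro v w hvw t ht
    obtain ⟨s, hs1, hs2⟩ := key v w hvw
    rw [uniq v t s ht hs1]
    exact hs2
  refine ⟨?_, trans, ?_⟩
  · intro v
    obtain ⟨w, hw⟩ := hasNbr v
    obtain ⟨s, hs1, hs2⟩ := key v w hw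
    exact ⟨s, hs1, fun t ht => uniq v t s ht hs1⟩
  · obtain ⟨v0, w0, h0⟩ := hedge
    obtain ⟨s0, hs0, -⟩ := key v0 w0 h0
    have step : ∀ (a b : V), Γ.Walk a b → ι (RAAG.gen Γ a) • s0 = s0 →
        ι (RAAG.gen Γ b) • s0 = s0 := by
      intro a b p
      induction p with
      | nil => exact id
      | cons h q ih => exact fun ha => ih (trans _ _ h s0 ha)
    have allgen : ∀ u : V, ι (RAAG.gen Γ u) • s0 = s0 := by
      intro u
      obtain ⟨p⟩ := hconn v0 u
      exact step v0 u p hs0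
    refine ⟨s0, fun g => ?_⟩
    have hstabclosed : IsClosed {k : K | k • s0 = s0} :=
      isClosed_eq (hact.comp (continuous_id.prodMk continuous_const)) continuous_const
    have hsub : Set.range ι ⊆ {k : K | k • s0 = s0} := by
      rintro _ ⟨g0, rfl⟩
      have hmem : g0 ∈ (MulAction.stabilizer K s0).comap ι := by
        refine PresentedGroup.generated_by (raagRels Γ) _ (fun j => ?_) g0
        exact Subgroup.mem_comap.mpr (allgen j)
      exact Subgroup.mem_comap.mp hmem
    exact closure_minimal hsub hstabclosed (hK.dense g)
end
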